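/- For every n ∈ ℕ and every x ∈ ℝ, the normalized even Hermite function satisfies -h_{2n}''(x) + (2π x)² h_{2n}(x) = 2π(4n+1) · h_{2n}(x); that is, h_{2n} is an eigenfunction of the Hermite operator H = -∂² + (2π q)² with eigenvalue 2π(4n+1). -/

import Mathlib

open Finset

/-- The normalized even Hermite function `h_{2n}`. -/
noncomputable def h2 (n : ℕ) (x : ℝ) : ℝ :=
  ∑ k ∈ Finset.range (n + 1),
    (-1 : ℝ) ^ (n - k) * (2 : ℝ) ^ ((3 * (k : ℝ)) - n + 1 / 4) *
      Real.sqrt ((2 * n).factorial) / ((2 * k).factorial * (n - k).factorial) *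
      Real.pi ^ k * x ^ (2 * k) * Real.exp (-Real.pi * x ^ 2)

/-- The coefficient of `x^(2k) e^{-πx²}` in `h_{2n}`. -/
noncomputable def cc (n k : ℕ) : ℝ :=
  (-1 : ℝ) ^ (n - k) * (2 : ℝ) ^ ((3 * (k : ℝ)) - n + 1 / 4) *
    Real.sqrt ((2 * n).factorial) / ((2 * k).factorial * (n - k).factorial) *
    Real.pi ^ k

lemma h2_eq (n : ℕ) (x : ℝ) :
    h2 n x = ∑ k ∈ range (n + 1), cc n k * x ^ (2 * k) * Real.exp (-Real.pi * x ^ 2) := rfl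

lemma hasDerivAt_gauss (x : ℝ) :
    HasDerivAt (fun y : ℝ => Real.exp (-Real.pi * y ^ 2))
      (-(2 * Real.pi * x) * Real.exp (-Real.pi * x ^ 2)) x := by
  have h1 : HasDerivAt (fun y : ℝ => -Real.pi * y ^ 2) (-(2 * Real.pi * x)) x := by
    have := (hasDerivAt_pow 2 x).const_mul (-Real.pi)
    refine this.congr_deriv ?_
    push_cast; ring
  have := h1.exp
  convert this using 1
  ring

noncomputable def D1 (n : ℕ) : ℝ → ℝ := fun x =>
  ∑ k ∈ range (n + 1), cc n k *
    (((2 * k : ℕ) : ℝ) * x ^ (2 * k - 1) - 2 * Real.pi * x ^ (2 * k + 1)) *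
    Real.exp (-Real.pi * x ^ 2)

noncomputable def D2 (n : ℕ) : ℝ → ℝ := fun x =>
  ∑ k ∈ range (n + 1), cc n k *
    (((2 * k : ℕ) : ℝ) * ((2 * k - 1 : ℕ) : ℝ) * x ^ (2 * k - 1 - 1)
      - 2 * Real.pi * (4 * (k : ℝ) + 1) * x ^ (2 * k)
      + 4 * Real.pi ^ 2 * x ^ (2 * k + 2)) *
    Real.exp (-Real.pi * x ^ 2)

lemma pow_pred_mul (m : ℕ) (x : ℝ) : (m : ℝ) * x ^ (m - 1) * x = (m : ℝ) * x ^ m := by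
  cases m with
  | zero => simp
  | succ m => simp only [Nat.add_sub_cancel, pow_succ]; ring

lemma hasDerivAt_h2 (n : ℕ) (x : ℝ) : HasDerivAt (h2 n) (D1 n x) x := by
  have e : h2 n = fun y => ∑ k ∈ range (n + 1),
      cc n k * y ^ (2 * k) * Real.exp (-Real.pi * y ^ 2) := funext fun y => h2_eq n y
  rw [e]
  apply HasDerivAt.fun_sum
  intro k _
  have h := ((hasDerivAt_pow (2 * k) x).const_mul (cc n k)).mul (hasDerivAt_gauss x)
  refine h.congr_deriv ?_
  push_cast
  ring

lemma hasDerivAt_D1 (n : ℕ) (x : ℝ) : HasDerivAt (D1 n) (D2 n x) x := by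
  apply HasDerivAt.fun_sum
  intro k _
  have hu : HasDerivAt
      (fun y : ℝ => cc n k * (((2 * k : ℕ) : ℝ) * y ^ (2 * k - 1) - 2 * Real.pi * y ^ (2 * k + 1)))
      (cc n k * (((2 * k : ℕ) : ℝ) * (((2 * k - 1 : ℕ) : ℝ) * x ^ (2 * k - 1 - 1))
        - 2 * Real.pi * (((2 * k + 1 : ℕ) : ℝ) * x ^ (2 * k + 1 - 1)))) x :=
    (((hasDerivAt_pow (2 * k - 1) x).const_mul _).sub
      ((hasDerivAt_pow (2 * k + 1) x).const_mul _)).const_mul _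
  have h := hu.mul (hasDerivAt_gauss x)
  refine h.congr_deriv ?_
  have key : ((2 * k : ℕ) : ℝ) * x ^ (2 * k - 1) * x = ((2 * k : ℕ) : ℝ) * x ^ (2 * k) :=
      pow_pred_mul _ _
  simp only [Nat.add_sub_cancel]
  push_cast at key ⊢
  linear_combination (-(2 * Real.pi * Real.exp (-Real.pi * x ^ 2) * cc n k)) * key

lemma cc_rec (n j : ℕ) (hjn : j < n) :
    cc n (j + 1) * ((2 * (j : ℝ) + 2) * (2 * (j : ℝ) + 1))
      = cc n j * (8 * Real.pi * ((j : ℝ) - n)) := by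
  obtain ⟨m, hm⟩ : ∃ m, n - j = m + 1 := ⟨n - j - 1, by omega⟩
  have h1 : n - (j + 1) = m := by omega
  unfold cc
  rw [hm, h1]
  have hr : (2 : ℝ) ^ ((3 * ((j + 1 : ℕ) : ℝ)) - n + 1 / 4)
      = 8 * (2 : ℝ) ^ ((3 * (j : ℝ)) - n + 1 / 4) := by
    rw [show (3 * ((j + 1 : ℕ) : ℝ)) - n + 1 / 4 = ((3 * (j : ℝ)) - n + 1 / 4) + 3 by
      push_cast; ring]
    rw [Real.rpow_add (by norm_num)]
    rw [show (3 : ℝ) = ((3 : ℕ) : ℝ) by norm_num, Real.rpow_natCast]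
    ring
  rw [hr]
  have hf1 : ((2 * (j + 1)).factorial : ℝ) = (2 * (j : ℝ) + 2) * (2 * (j : ℝ) + 1) * ((2 * j).factorial : ℝ) := by
    rw [show 2 * (j + 1) = (2 * j + 1) + 1 by ring, Nat.factorial_succ, Nat.factorial_succ]
    push_cast; ring
  have hf2 : ((m + 1).factorial : ℝ) = ((m : ℝ) + 1) * (m.factorial : ℝ) := by
    rw [Nat.factorial_succ]; push_cast; ring
  have hmn : ((j : ℝ) - n) = -((m : ℝ) + 1) := by
    have hn : n = j + (m + 1) := by omega
    subst hn; push_cast; ring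
  rw [hf1, hf2, hmn]
  have hpow : (-1 : ℝ) ^ (m + 1) = -(-1 : ℝ) ^ m := by rw [pow_succ]; ring
  rw [hpow]
  have h2j : ((2 * j).factorial : ℝ) ≠ 0 := by positivity
  have hmf : (m.factorial : ℝ) ≠ 0 := by positivity
  have h2j1 : (2 * (j : ℝ) + 1) ≠ 0 := by positivity
  have h2j2 : (2 * (j : ℝ) + 2) ≠ 0 := by positivity
  have hm1 : ((m : ℝ) + 1) ≠ 0 := by positivity
  field_simp
  ring

lemma key_sum (n : ℕ) (x : ℝ) :
    ∑ k ∈ range (n + 1), cc n k * (((2 * k : ℕ) : ℝ) * ((2 * k - 1 : ℕ) : ℝ)) * x ^ (2 * k - 1 - 1)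
      = ∑ k ∈ range (n + 1), cc n k * (8 * Real.pi * ((k : ℝ) - n)) * x ^ (2 * k) := by
  rw [Finset.sum_range_succ' _ n, Finset.sum_range_succ]
  have h0 : cc n 0 * (((2 * 0 : ℕ) : ℝ) * ((2 * 0 - 1 : ℕ) : ℝ)) * x ^ (2 * 0 - 1 - 1) = 0 := by
    norm_num
  have hn : cc n n * (8 * Real.pi * ((n : ℝ) - n)) * x ^ (2 * n) = 0 := by simp
  rw [h0, hn, add_zero, add_zero]
  apply Finset.sum_congr rfl
  intro j hj
  have hjn : j < n := Finset.mem_range.mp hj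
  have he : 2 * (j + 1) - 1 - 1 = 2 * j := by omega
  rw [he]
  have e2 : ((2 * (j + 1) : ℕ) : ℝ) = 2 * (j : ℝ) + 2 := by push_cast; ring
  have e3 : ((2 * (j + 1) - 1 : ℕ) : ℝ) = 2 * (j : ℝ) + 1 := by
    rw [show 2 * (j + 1) - 1 = 2 * j + 1 by omega]; push_cast; ring
  rw [e2, e3]
  have hrec := cc_rec n j hjn
  linear_combination x ^ (2 * j) * hrec

/-- `h_{2n}` is an eigenfunction of the Hermite operator `-∂² + (2πq)²`
with eigenvalue `2π(4n+1)`. -/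
theorem stmt4 (n : ℕ) (x : ℝ) :
    -(deriv (deriv (h2 n)) x) + (2 * Real.pi * x) ^ 2 * h2 n x
      = 2 * Real.pi * (4 * (n : ℝ) + 1) * h2 n x := by
  have e1 : deriv (h2 n) = D1 n := funext fun y => (hasDerivAt_h2 n y).deriv
  rw [e1, (hasDerivAt_D1 n x).deriv, h2_eq]
  have hs := key_sum n x
  rw [← sub_eq_zero]
  have expand : -(D2 n x) + (2 * Real.pi * x) ^ 2 *
        (∑ k ∈ range (n + 1), cc n k * x ^ (2 * k) * Real.exp (-Real.pi * x ^ 2))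
      - 2 * Real.pi * (4 * (n : ℝ) + 1) *
        (∑ k ∈ range (n + 1), cc n k * x ^ (2 * k) * Real.exp (-Real.pi * x ^ 2))
      = Real.exp (-Real.pi * x ^ 2) *
        ((∑ k ∈ range (n + 1), cc n k * (8 * Real.pi * ((k : ℝ) - n)) * x ^ (2 * k))
          - (∑ k ∈ range (n + 1),
              cc n k * (((2 * k : ℕ) : ℝ) * ((2 * k - 1 : ℕ) : ℝ)) * x ^ (2 * k - 1 - 1))) := by
    simp only [D2, Finset.mul_sum, ← Finset.sum_sub_distrib, ← Finset.sum_add_distrib,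
      ← Finset.sum_neg_distrib]
    apply Finset.sum_congr rfl
    intro k _
    ring
  rw [expand, ← hs, sub_self, mul_zero]
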